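/- Suppose φ, Xα, Xβ, ξ : D → ℝ⁴ are smooth, satisfy the structure system, are orthonormal at every point of D, and f : D → ℝ⁴ is an associated curvature surface. Then the map (x,y) ↦ f(x,y) − (2√5(1+y²))^{−1}(Xβ(x,y) − 2(1+y²) ξ(x,y) + y φ(x,y)) has identically vanishing partial derivative in x; denoting its value by A(y), every x-curve satisfies ‖f(x,y) − A(y)‖ = (2√5)^{−1} √((5+4y²)/(1+y²)) and ⟨f(x,y) − A(y), y Xβ(x,y) − φ(x,y)⟩ = 0 for all (x,y) ∈ D. In particular, for each fixed y the x-curve x ↦ f(x,y) lies on a 2-sphere of radius (2√5)^{−1} √((5+4y²)/(1+y²)) centered at A(y) in the affine hyperplane through A(y) perpendicular to u(y) := (1+y²)^{−1/2}(y Xβ − φ). -/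

import Mathlib

open Real Set

noncomputable section

/-- `h(x,y) = 2X₀(x) − x X₀'(x) + y² g(x) + √5`. -/
def hfun (X0 g : ℝ → ℝ) (x y : ℝ) : ℝ :=
  2 * X0 x - x * deriv X0 x + y ^ 2 * g x + Real.sqrt 5

/-- `a₁(x,y) = (2y/(x h(x,y)))(X₀(x) + √5/2)`. -/
def a1 (X0 g : ℝ → ℝ) (x y : ℝ) : ℝ :=
  2 * y / (x * hfun X0 g x y) * (X0 x + Real.sqrt 5 / 2)

/-- `b₁(x,y) = −(1/(x h(x,y)))(X₀(x) + √5/2 + √5(x² − y²))`. -/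
def b1 (X0 g : ℝ → ℝ) (x y : ℝ) : ℝ :=
  -(1 / (x * hfun X0 g x y)) * (X0 x + Real.sqrt 5 / 2 + Real.sqrt 5 * (x ^ 2 - y ^ 2))

/-- `c₁(x,y) = −(2/(x h(x,y)))(X₀(x) + √5/2)`. -/
def c1 (X0 g : ℝ → ℝ) (x y : ℝ) : ℝ :=
  -(2 / (x * hfun X0 g x y)) * (X0 x + Real.sqrt 5 / 2)

/-- `a₂(x,y) = −(1/h(x,y))(2X₀(x) + √5 − (x² + y²) g(x))`. -/
def a2 (X0 g : ℝ → ℝ) (x y : ℝ) : ℝ :=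
  -(1 / hfun X0 g x y) * (2 * X0 x + Real.sqrt 5 - (x ^ 2 + y ^ 2) * g x)

/-- `b₂(x,y) = −(2y/h(x,y))(g(x)/2 + √5)`. -/
def b2 (X0 g : ℝ → ℝ) (x y : ℝ) : ℝ :=
  -(2 * y / hfun X0 g x y) * (g x / 2 + Real.sqrt 5)

/-- `c₂(x,y) = (2y/h(x,y))(X₀''(x) − g(x))`. -/
def c2 (X0 g : ℝ → ℝ) (x y : ℝ) : ℝ :=
  2 * y / hfun X0 g x y * (iteratedDeriv 2 X0 x - g x)

end

noncomputable section

/-- Euclidean `ℝ⁴`. -/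
abbrev E4 := EuclideanSpace ℝ (Fin 4)

/-- The maps `φ, Xα, Xβ, ξ : D → ℝ⁴` satisfy the structure system
`∂φ/∂x = −a₁Xα`, `∂Xα/∂x = a₁φ − b₁ξ − c₁Xβ`, `∂Xβ/∂x = c₁Xα`, `∂ξ/∂x = b₁Xα`,
`∂φ/∂y = −a₂Xβ`, `∂Xβ/∂y = a₂φ − b₂ξ − c₂Xα`, `∂Xα/∂y = c₂Xβ`, `∂ξ/∂y = b₂Xβ`
on `D = {x > 0}`. -/
def StructSys (X0 g : ℝ → ℝ) (φ Xa Xb ξ : ℝ → ℝ → E4) : Prop :=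
  ∀ x y : ℝ, 0 < x →
    HasDerivAt (fun s => φ s y) ((-a1 X0 g x y) • Xa x y) x ∧
    HasDerivAt (fun s => Xa s y)
      (a1 X0 g x y • φ x y - b1 X0 g x y • ξ x y - c1 X0 g x y • Xb x y) x ∧
    HasDerivAt (fun s => Xb s y) (c1 X0 g x y • Xa x y) x ∧
    HasDerivAt (fun s => ξ s y) (b1 X0 g x y • Xa x y) x ∧
    HasDerivAt (fun t => φ x t) ((-a2 X0 g x y) • Xb x y) y ∧
    HasDerivAt (fun t => Xb x t)
      (a2 X0 g x y • φ x y - b2 X0 g x y • ξ x y - c2 X0 g x y • Xa x y) y ∧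
    HasDerivAt (fun t => Xa x t) (c2 X0 g x y • Xb x y) y ∧
    HasDerivAt (fun t => ξ x t) (b2 X0 g x y • Xb x y) y

/-- Smoothness of a two-parameter map on `D = {x > 0}`. -/
def SmoothOnD (φ : ℝ → ℝ → E4) : Prop :=
  ContDiffOn ℝ (⊤ : ℕ∞) (fun p : ℝ × ℝ => φ p.1 p.2) {p : ℝ × ℝ | 0 < p.1}

/-- `(φ, Xα, Xβ, ξ)` is an orthonormal system at every point of `D = {x > 0}`. -/
def OrthFrame (φ Xa Xb ξ : ℝ → ℝ → E4) : Prop :=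
  ∀ x y : ℝ, 0 < x → Orthonormal ℝ ![φ x y, Xa x y, Xb x y, ξ x y]

/-- `f` is an associated curvature surface: `∂f/∂x = ((x²−y²)/(x h)) Xα` and
`∂f/∂y = (2y/h) Xβ` on `D = {x > 0}`. -/
def CurvSurf (X0 g : ℝ → ℝ) (Xa Xb f : ℝ → ℝ → E4) : Prop :=
  ∀ x y : ℝ, 0 < x →
    HasDerivAt (fun s => f s y)
      (((x ^ 2 - y ^ 2) / (x * hfun X0 g x y)) • Xa x y) x ∧
    HasDerivAt (fun t => f x t) ((2 * y / hfun X0 g x y) • Xb x y) y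

end

/-- Under the structure system, orthonormality and the curvature-surface
equations, the map `(x,y) ↦ f(x,y) − (2√5(1+y²))⁻¹(Xβ − 2(1+y²)ξ + yφ)` has vanishing
`x`-derivative; its value `A(y)` is the center of a 2-sphere of radius
`(2√5)⁻¹√((5+4y²)/(1+y²))` containing the `x`-curve, in the affine hyperplane through `A(y)`
perpendicular to `u(y) = (1+y²)^{−1/2}(y Xβ − φ)`. -/
theorem stmt13 (a : ℕ → ℝ) (ha1 : a 1 = 1)
    (harec : ∀ k : ℕ, 1 ≤ k →
      2 * ((k : ℝ) + 1) * (4 * (k : ℝ) ^ 2 + 5 / 4) * a (k + 1) + (2 * (k : ℝ) - 1) * a k = 0)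
    (X0 : ℝ → ℝ)
    (hX0 : ∀ x : ℝ, HasSum (fun k : ℕ => a (k + 1) * x ^ (2 * (k + 1))) (X0 x - 5 / 2))
    (g : ℝ → ℝ) (hganal : AnalyticOnNhd ℝ g Set.univ)
    (hg : ∀ x : ℝ, x ≠ 0 → g x = deriv X0 x / x) (hg0 : g 0 = 2)
    (φ Xa Xb ξ f : ℝ → ℝ → E4)
    (hsm : SmoothOnD φ ∧ SmoothOnD Xa ∧ SmoothOnD Xb ∧ SmoothOnD ξ ∧ SmoothOnD f)
    (hsys : StructSys X0 g φ Xa Xb ξ)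
    (horth : OrthFrame φ Xa Xb ξ)
    (hcurv : CurvSurf X0 g Xa Xb f) :
    (∀ x y : ℝ, 0 < x →
      HasDerivAt
        (fun s => f s y
          - (2 * Real.sqrt 5 * (1 + y ^ 2))⁻¹ •
              (Xb s y - (2 * (1 + y ^ 2)) • ξ s y + y • φ s y)) (0 : E4) x) ∧
    ∃ A : ℝ → E4,
      (∀ x y : ℝ, 0 < x →
        f x y - (2 * Real.sqrt 5 * (1 + y ^ 2))⁻¹ •
            (Xb x y - (2 * (1 + y ^ 2)) • ξ x y + y • φ x y) = A y) ∧
      (∀ x y : ℝ, 0 < x →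
        ‖f x y - A y‖ = (2 * Real.sqrt 5)⁻¹ * Real.sqrt ((5 + 4 * y ^ 2) / (1 + y ^ 2)) ∧
        inner ℝ (f x y - A y) (y • Xb x y - φ x y) = (0 : ℝ)) := by

  have hs5pos : (0:ℝ) < Real.sqrt 5 := Real.sqrt_pos.mpr (by norm_num)
  -- Key: vanishing x-derivative
  have key : ∀ x y : ℝ, 0 < x →
      HasDerivAt
        (fun s => f s y
          - (2 * Real.sqrt 5 * (1 + y ^ 2))⁻¹ •
              (Xb s y - (2 * (1 + y ^ 2)) • ξ s y + y • φ s y)) (0 : E4) x := by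
    intro x y hx
    obtain ⟨hfx, -⟩ := hcurv x y hx
    obtain ⟨hφx, -, hXbx, hξx, -, -, -, -⟩ := hsys x y hx
    have hD : HasDerivAt
        (fun s => f s y
          - (2 * Real.sqrt 5 * (1 + y ^ 2))⁻¹ •
              (Xb s y - (2 * (1 + y ^ 2)) • ξ s y + y • φ s y))
        (((x ^ 2 - y ^ 2) / (x * hfun X0 g x y)) • Xa x y
          - (2 * Real.sqrt 5 * (1 + y ^ 2))⁻¹ •
              ((c1 X0 g x y • Xa x y) - (2 * (1 + y ^ 2)) • (b1 X0 g x y • Xa x y)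
                + y • ((-a1 X0 g x y) • Xa x y))) x :=
      hfx.fun_sub (((hXbx.fun_sub (hξx.fun_const_smul (2 * (1 + y ^ 2)))).fun_add (hφx.fun_const_smul y)).fun_const_smul (2 * Real.sqrt 5 * (1 + y ^ 2))⁻¹)
    have hcoef : (x ^ 2 - y ^ 2) / (x * hfun X0 g x y)
        - (2 * Real.sqrt 5 * (1 + y ^ 2))⁻¹ *
            (c1 X0 g x y - 2 * (1 + y ^ 2) * b1 X0 g x y + y * (-a1 X0 g x y)) = 0 := by
      by_cases hH : x * hfun X0 g x y = 0
      · simp [a1, b1, c1, hH]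
      · have h2 : 2 * Real.sqrt 5 * (1 + y ^ 2) ≠ 0 := by positivity
        rw [a1, b1, c1]
        field_simp
        ring
    have : ((x ^ 2 - y ^ 2) / (x * hfun X0 g x y)) • Xa x y
          - (2 * Real.sqrt 5 * (1 + y ^ 2))⁻¹ •
              ((c1 X0 g x y • Xa x y) - (2 * (1 + y ^ 2)) • (b1 X0 g x y • Xa x y)
                + y • ((-a1 X0 g x y) • Xa x y))
        = ((x ^ 2 - y ^ 2) / (x * hfun X0 g x y)
          - (2 * Real.sqrt 5 * (1 + y ^ 2))⁻¹ *
            (c1 X0 g x y - 2 * (1 + y ^ 2) * b1 X0 g x y + y * (-a1 X0 g x y))) • Xa x y := by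
      module
    rw [this, hcoef, zero_smul] at hD
    exact hD
  refine ⟨key, ?_⟩
  refine ⟨fun y => f 1 y - (2 * Real.sqrt 5 * (1 + y ^ 2))⁻¹ •
      (Xb 1 y - (2 * (1 + y ^ 2)) • ξ 1 y + y • φ 1 y), ?_, ?_⟩
  case _ =>
    intro x y hx
    have hle := (convex_Ioi (0:ℝ)).norm_image_sub_le_of_norm_hasDerivWithin_le
      (f' := fun _ => (0 : E4))
      (f := fun s => f s y - (2 * Real.sqrt 5 * (1 + y ^ 2))⁻¹ •
          (Xb s y - (2 * (1 + y ^ 2)) • ξ s y + y • φ s y))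
      (C := 0)
      (fun z hz => (key z y hz).hasDerivWithinAt)
      (fun z _ => by simp) (mem_Ioi.mpr one_pos) (mem_Ioi.mpr hx)
    rw [zero_mul] at hle
    have := le_antisymm hle (norm_nonneg _)
    rw [norm_eq_zero, sub_eq_zero] at this
    exact this
  · intro x y hx
    have h1y : (0:ℝ) < 1 + y ^ 2 := by positivity
    have hA : f x y - (2 * Real.sqrt 5 * (1 + y ^ 2))⁻¹ •
        (Xb x y - (2 * (1 + y ^ 2)) • ξ x y + y • φ x y)
        = f 1 y - (2 * Real.sqrt 5 * (1 + y ^ 2))⁻¹ •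
        (Xb 1 y - (2 * (1 + y ^ 2)) • ξ 1 y + y • φ 1 y) := by
      have hle := (convex_Ioi (0:ℝ)).norm_image_sub_le_of_norm_hasDerivWithin_le
        (f' := fun _ => (0 : E4))
        (f := fun s => f s y - (2 * Real.sqrt 5 * (1 + y ^ 2))⁻¹ •
            (Xb s y - (2 * (1 + y ^ 2)) • ξ s y + y • φ s y))
        (C := 0)
        (fun z hz => (key z y hz).hasDerivWithinAt)
        (fun z _ => by simp) (mem_Ioi.mpr one_pos) (mem_Ioi.mpr hx)
      rw [zero_mul] at hle
      have := le_antisymm hle (norm_nonneg _)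
      rw [norm_eq_zero, sub_eq_zero] at this
      exact this
    have hdiff : f x y - (f 1 y - (2 * Real.sqrt 5 * (1 + y ^ 2))⁻¹ •
        (Xb 1 y - (2 * (1 + y ^ 2)) • ξ 1 y + y • φ 1 y))
        = (2 * Real.sqrt 5 * (1 + y ^ 2))⁻¹ •
          (Xb x y - (2 * (1 + y ^ 2)) • ξ x y + y • φ x y) := by
      rw [← hA]; abel
    have ho := horth x y hx
    rw [orthonormal_iff_ite] at ho
    have i00 : inner ℝ (φ x y) (φ x y) = (1:ℝ) := by simpa using ho 0 0
    have i22 : inner ℝ (Xb x y) (Xb x y) = (1:ℝ) := by simpa using ho 2 2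
    have i33 : inner ℝ (ξ x y) (ξ x y) = (1:ℝ) := by simpa using ho 3 3
    have i23 : inner ℝ (Xb x y) (ξ x y) = (0:ℝ) := by simpa using ho 2 3
    have i32 : inner ℝ (ξ x y) (Xb x y) = (0:ℝ) := by simpa using ho 3 2
    have i20 : inner ℝ (Xb x y) (φ x y) = (0:ℝ) := by simpa using ho 2 0
    have i02 : inner ℝ (φ x y) (Xb x y) = (0:ℝ) := by simpa using ho 0 2
    have i30 : inner ℝ (ξ x y) (φ x y) = (0:ℝ) := by simpa using ho 3 0
    have i03 : inner ℝ (φ x y) (ξ x y) = (0:ℝ) := by simpa using ho 0 3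
    constructor
    · rw [hdiff, norm_smul]
      have hinner : inner ℝ (Xb x y - (2 * (1 + y ^ 2)) • ξ x y + y • φ x y)
          (Xb x y - (2 * (1 + y ^ 2)) • ξ x y + y • φ x y)
          = (1 + y ^ 2) * (5 + 4 * y ^ 2) := by
        simp only [inner_add_left, inner_add_right, inner_sub_left, inner_sub_right,
          real_inner_smul_left, real_inner_smul_right, i00, i22, i33, i23, i32, i20, i02,
          i30, i03]
        ring
      have hw : ‖Xb x y - (2 * (1 + y ^ 2)) • ξ x y + y • φ x y‖
          = Real.sqrt ((1 + y ^ 2) * (5 + 4 * y ^ 2)) := by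
        rw [norm_eq_sqrt_real_inner, hinner]
      rw [hw, Real.norm_eq_abs, abs_of_pos (by positivity),
        Real.sqrt_mul h1y.le, Real.sqrt_div (by positivity : (0:ℝ) ≤ 5 + 4 * y ^ 2)]
      have hne : Real.sqrt (1 + y ^ 2) ≠ 0 := by positivity
      have hsq : Real.sqrt (1 + y ^ 2) ^ 2 = 1 + y ^ 2 := Real.sq_sqrt h1y.le
      have h5 : Real.sqrt 5 ≠ 0 := ne_of_gt hs5pos
      field_simp
      linear_combination hsq
    · rw [hdiff]
      simp only [inner_add_left, inner_sub_left, inner_sub_right,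
        real_inner_smul_left, real_inner_smul_right, i00, i22, i33, i23, i32, i20, i02,
        i30, i03]
      ring
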